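/- Let M be a model category which is right proper (weak equivalences are closed under pullbacks along fibrations) and in which, for every weak equivalence w : X → X', the product morphism w × w : X × X → X' × X' is again a weak equivalence. Then the path-homotopy relation ≈ is a congruence on the full subcategory Cof(M) of cofibrant objects, and the canonical functor Cof(M)/≈ → Ho Cof(M) from the quotient category to the homotopy category (the localization of Cof(M) at its weak equivalences) is faithful. -/

import Mathlib

open CategoryTheory CategoryTheory.Limits

universe v u

/-- A (closed) model structure on a category `C` with finite limits and colimits,
in the sense of Quillen: classes of cofibrations, fibrations and weak equivalences,
containing all isomorphisms, satisfying two-out-of-three for weak equivalences,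
closure under retracts, the lifting axioms and the factorization axioms. -/
structure ModelStructure (C : Type u) [Category.{v} C]
    [HasFiniteLimits C] [HasFiniteColimits C] where
  cof : MorphismProperty C
  fib : MorphismProperty C
  weq : MorphismProperty C
  cof_of_isIso : ∀ {X Y : C} (f : X ⟶ Y), IsIso f → cof f
  fib_of_isIso : ∀ {X Y : C} (f : X ⟶ Y), IsIso f → fib f
  weq_of_isIso : ∀ {X Y : C} (f : X ⟶ Y), IsIso f → weq f
  weq_comp : ∀ {X Y Z : C} (f : X ⟶ Y) (g : Y ⟶ Z), weq f → weq g → weq (f ≫ g)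
  weq_of_comp_left : ∀ {X Y Z : C} (f : X ⟶ Y) (g : Y ⟶ Z), weq f → weq (f ≫ g) → weq g
  weq_of_comp_right : ∀ {X Y Z : C} (f : X ⟶ Y) (g : Y ⟶ Z), weq g → weq (f ≫ g) → weq f
  cof_retract : ∀ {A B A' B' : C} (f : A ⟶ B) (g : A' ⟶ B')
    (iA : A ⟶ A') (rA : A' ⟶ A) (iB : B ⟶ B') (rB : B' ⟶ B),
    iA ≫ rA = 𝟙 A → iB ≫ rB = 𝟙 B → iA ≫ g = f ≫ iB → g ≫ rB = rA ≫ f → cof g → cof f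
  fib_retract : ∀ {A B A' B' : C} (f : A ⟶ B) (g : A' ⟶ B')
    (iA : A ⟶ A') (rA : A' ⟶ A) (iB : B ⟶ B') (rB : B' ⟶ B),
    iA ≫ rA = 𝟙 A → iB ≫ rB = 𝟙 B → iA ≫ g = f ≫ iB → g ≫ rB = rA ≫ f → fib g → fib f
  weq_retract : ∀ {A B A' B' : C} (f : A ⟶ B) (g : A' ⟶ B')
    (iA : A ⟶ A') (rA : A' ⟶ A) (iB : B ⟶ B') (rB : B' ⟶ B),
    iA ≫ rA = 𝟙 A → iB ≫ rB = 𝟙 B → iA ≫ g = f ≫ iB → g ≫ rB = rA ≫ f → weq g → weq f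
  lift_of_weq_cof : ∀ {A B X Y : C} (i : A ⟶ B) (p : X ⟶ Y),
    cof i → weq i → fib p → HasLiftingProperty i p
  lift_of_weq_fib : ∀ {A B X Y : C} (i : A ⟶ B) (p : X ⟶ Y),
    cof i → fib p → weq p → HasLiftingProperty i p
  factor_cof_triv_fib : ∀ {X Y : C} (f : X ⟶ Y),
    ∃ (Z : C) (i : X ⟶ Z) (p : Z ⟶ Y), cof i ∧ fib p ∧ weq p ∧ i ≫ p = f
  factor_triv_cof_fib : ∀ {X Y : C} (f : X ⟶ Y),
    ∃ (Z : C) (i : X ⟶ Z) (p : Z ⟶ Y), cof i ∧ weq i ∧ fib p ∧ i ≫ p = f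

namespace ModelStructure

variable {C : Type u} [Category.{v} C] [HasFiniteLimits C] [HasFiniteColimits C]
  (M : ModelStructure C)

/-- An object is fibrant if the unique morphism to the terminal object is a fibration. -/
def Fibrant (X : C) : Prop := M.fib (terminal.from X)

/-- An object is cofibrant if the unique morphism from the initial object is a cofibration. -/
def Cofibrant (X : C) : Prop := M.cof (initial.to X)

/-- A cylinder for `X`: a cofibration `ins : X ⊔ X ⟶ Z` and a weak equivalence `p : Z ⟶ X`
whose composite is the fold map. -/
structure Cylinder (X : C) where
  Z : C
  ins : (X ⨿ X) ⟶ Z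
  p : Z ⟶ X
  cof_ins : M.cof ins
  weq_p : M.weq p
  ins_p : ins ≫ p = coprod.desc (𝟙 X) (𝟙 X)

/-- `f` and `g` are cylinder homotopic if there is a cylinder homotopy from `f` to `g`. -/
def CylinderHomotopic {X Y : C} (f g : X ⟶ Y) : Prop :=
  ∃ (cyl : M.Cylinder X) (H : cyl.Z ⟶ Y),
    coprod.inl ≫ cyl.ins ≫ H = f ∧ coprod.inr ≫ cyl.ins ≫ H = g

/-- A path object for `Y`: a weak equivalence `s : Y ⟶ P` and a fibration `pr : P ⟶ Y ⨯ Y`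
whose composite is the diagonal. -/
structure PathObject (Y : C) where
  P : C
  pr : P ⟶ (Y ⨯ Y)
  s : Y ⟶ P
  fib_pr : M.fib pr
  weq_s : M.weq s
  s_pr : s ≫ pr = prod.lift (𝟙 Y) (𝟙 Y)

/-- `f` and `g` are path homotopic if there is a path homotopy from `f` to `g`. -/
def PathHomotopic {X Y : C} (f g : X ⟶ Y) : Prop :=
  ∃ (po : M.PathObject Y) (K : X ⟶ po.P),
    K ≫ po.pr ≫ prod.fst = f ∧ K ≫ po.pr ≫ prod.snd = g

/-- Left properness: weak equivalences are closed under pushouts along cofibrations. -/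
def LeftProper : Prop :=
  ∀ ⦃A B X P : C⦄ (f : A ⟶ X) (g : A ⟶ B) (h : X ⟶ P) (k : B ⟶ P),
    IsPushout f g h k → M.cof g → M.weq f → M.weq k

/-- Right properness: weak equivalences are closed under pullbacks along fibrations. -/
def RightProper : Prop :=
  ∀ ⦃P X Y B : C⦄ (fst : P ⟶ X) (snd : P ⟶ Y) (f : X ⟶ B) (g : Y ⟶ B),
    IsPullback fst snd f g → M.fib g → M.weq f → M.weq snd

/-- The weak equivalences of the full subcategory of fibrant objects. -/
def weqFib : MorphismProperty (ObjectProperty.FullSubcategory M.Fibrant) := fun _ _ f => M.weq f.hom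

/-- The cylinder homotopy relation on the full subcategory of fibrant objects. -/
def cylRel : HomRel (ObjectProperty.FullSubcategory M.Fibrant) :=
  fun {X Y} f g => M.CylinderHomotopic (X := X.obj) (Y := Y.obj) f.hom g.hom

/-- The weak equivalences of the full subcategory of cofibrant objects. -/
def weqCof : MorphismProperty (ObjectProperty.FullSubcategory M.Cofibrant) := fun _ _ f => M.weq f.hom

/-- The path homotopy relation on the full subcategory of cofibrant objects. -/
def pathRel : HomRel (ObjectProperty.FullSubcategory M.Cofibrant) :=
  fun {X Y} f g => M.PathHomotopic (X := X.obj) (Y := Y.obj) f.hom g.hom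

end ModelStructure

namespace ModelStructure

variable {C : Type u} [Category.{v} C] [HasFiniteLimits C] [HasFiniteColimits C]
  (M : ModelStructure C)

attribute [local simp] prod.lift_fst prod.lift_snd prod.lift_fst_assoc prod.lift_snd_assoc
  pullback.lift_fst pullback.lift_snd pullback.lift_fst_assoc pullback.lift_snd_assoc

/-! ### Lifting characterizations and closure properties -/

lemma cof_of_llp {A B : C} (f : A ⟶ B)
    (h : ∀ ⦃X Y : C⦄ (p : X ⟶ Y), M.fib p → M.weq p → HasLiftingProperty f p) : M.cof f := by
  obtain ⟨Z, i, p, hi, hp, hpw, hfac⟩ := M.factor_cof_triv_fib f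
  haveI := h p hp hpw
  have sq : CommSq i f p (𝟙 B) := ⟨by simp [hfac]⟩
  exact M.cof_retract f i (𝟙 A) (𝟙 A) sq.lift p (by simp) sq.fac_right
    (by simpa using sq.fac_left.symm) (by simp [hfac]) hi

lemma fib_of_rlp {X Y : C} (p : X ⟶ Y)
    (h : ∀ ⦃A B : C⦄ (i : A ⟶ B), M.cof i → M.weq i → HasLiftingProperty i p) : M.fib p := by
  obtain ⟨Z, i, q, hic, hiw, hq, hfac⟩ := M.factor_triv_cof_fib p
  haveI := h i hic hiw
  have sq : CommSq (𝟙 X) i p q := ⟨by simp [hfac]⟩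
  exact M.fib_retract p q i sq.lift (𝟙 Y) (𝟙 Y) sq.fac_left (by simp)
    (by simp [hfac]) (by simpa using sq.fac_right) hq

lemma cof_comp {A B D : C} {f : A ⟶ B} {g : B ⟶ D} (hf : M.cof f) (hg : M.cof g) :
    M.cof (f ≫ g) := by
  apply M.cof_of_llp
  intro X Y p hp hpw
  haveI := M.lift_of_weq_fib f p hf hp hpw
  haveI := M.lift_of_weq_fib g p hg hp hpw
  infer_instance

lemma fib_comp {X Y Z : C} {p : X ⟶ Y} {q : Y ⟶ Z} (hp : M.fib p) (hq : M.fib q) :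
    M.fib (p ≫ q) := by
  apply M.fib_of_rlp
  intro A B i hic hiw
  haveI := M.lift_of_weq_cof i p hic hiw hp
  haveI := M.lift_of_weq_cof i q hic hiw hq
  infer_instance

lemma fib_of_isPullback {P X Y B : C} {fst : P ⟶ X} {snd : P ⟶ Y} {f : X ⟶ B} {g : Y ⟶ B}
    (h : IsPullback fst snd f g) (hg : M.fib g) : M.fib fst := by
  apply M.fib_of_rlp
  intro A A' i hic hiw
  haveI := M.lift_of_weq_cof i g hic hiw hg
  constructor
  intro t b sq
  have sq2 : CommSq (t ≫ snd) i g (b ≫ f) :=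
    ⟨by rw [Category.assoc, ← h.w, ← Category.assoc, sq.w, Category.assoc]⟩
  exact CommSq.HasLift.mk'
    { l := h.lift b sq2.lift (by rw [sq2.fac_right])
      fac_left := by
        apply h.hom_ext
        · rw [Category.assoc, IsPullback.lift_fst, ← sq.w]
        · rw [Category.assoc, IsPullback.lift_snd, sq2.fac_left]
      fac_right := by rw [IsPullback.lift_fst] }

lemma fib_prod_fst {A B : C} (hB : M.fib (terminal.from B)) :
    M.fib (prod.fst : A ⨯ B ⟶ A) := by
  apply M.fib_of_rlp
  intro U V i hic hiw
  haveI := M.lift_of_weq_cof i (terminal.from B) hic hiw hB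
  constructor
  intro t b sq
  have sq2 : CommSq (t ≫ prod.snd) i (terminal.from B) (terminal.from V) :=
    ⟨terminal.hom_ext _ _⟩
  exact CommSq.HasLift.mk'
    { l := prod.lift b sq2.lift
      fac_left := by
        apply Limits.prod.hom_ext
        · simpa using sq.w.symm
        · simpa using sq2.fac_left
      fac_right := by simp }

lemma fib_prod_snd {A B : C} (hA : M.fib (terminal.from A)) :
    M.fib (prod.snd : A ⨯ B ⟶ B) := by
  apply M.fib_of_rlp
  intro U V i hic hiw
  haveI := M.lift_of_weq_cof i (terminal.from A) hic hiw hA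
  constructor
  intro t b sq
  have sq2 : CommSq (t ≫ prod.fst) i (terminal.from A) (terminal.from V) :=
    ⟨terminal.hom_ext _ _⟩
  exact CommSq.HasLift.mk'
    { l := prod.lift sq2.lift b
      fac_left := by
        apply Limits.prod.hom_ext
        · simpa using sq2.fac_left
        · simpa using sq.w.symm
      fac_right := by simp }

lemma fib_prod_map_id {Z A B : C} {q : A ⟶ B} (hq : M.fib q) :
    M.fib (prod.map (𝟙 Z) q) := by
  apply M.fib_of_rlp
  intro U V i hic hiw
  haveI := M.lift_of_weq_cof i q hic hiw hq
  constructor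
  intro t b sq
  have sq2 : CommSq (t ≫ prod.snd) i q (b ≫ prod.snd) :=
    ⟨by rw [Category.assoc, ← prod.map_snd (𝟙 Z) q, ← Category.assoc, sq.w, Category.assoc]⟩
  exact CommSq.HasLift.mk'
    { l := prod.lift (b ≫ prod.fst) sq2.lift
      fac_left := by
        apply Limits.prod.hom_ext
        · have : t ≫ prod.fst = i ≫ b ≫ prod.fst := by
            rw [← Category.assoc, ← sq.w]
            simp
          simpa using this.symm
        · simpa using sq2.fac_left
      fac_right := by
        apply Limits.prod.hom_ext
        · simp
        · simpa using sq2.fac_right }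

lemma isPullback_snd_map {Z A B : C} (q : A ⟶ B) :
    IsPullback (prod.snd : Z ⨯ A ⟶ A) (prod.map (𝟙 Z) q) q (prod.snd : Z ⨯ B ⟶ B) :=
  IsPullback.of_isLimit (PullbackCone.IsLimit.mk ((prod.map_snd (𝟙 Z) q).symm)
    (fun s => prod.lift (s.snd ≫ prod.fst) s.fst)
    (fun s => prod.lift_snd _ _)
    (fun s => by
      apply Limits.prod.hom_ext
      · simp only [Category.assoc, prod.map_fst, Category.comp_id, prod.lift_fst]
      · simp only [Category.assoc, prod.map_snd, prod.lift_snd_assoc]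
        exact s.condition)
    (fun s m h1 h2 => by
      apply Limits.prod.hom_ext
      · have h3 := h2 =≫ prod.fst
        simp only [Category.assoc, prod.map_fst, Category.comp_id] at h3
        rw [prod.lift_fst]
        exact h3
      · rw [prod.lift_snd]
        exact h1))

/-! ### Path objects and basic properties of path homotopy -/

lemma pathObject_exists (Y : C) : Nonempty (M.PathObject Y) := by
  obtain ⟨Z, i, p, hc, hw, hf, hfac⟩ := M.factor_triv_cof_fib (prod.lift (𝟙 Y) (𝟙 Y))
  exact ⟨⟨Z, p, i, hf, hw, hfac⟩⟩

lemma pathHomotopic_refl {X Y : C} (f : X ⟶ Y) : M.PathHomotopic f f := by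
  obtain ⟨po⟩ := M.pathObject_exists Y
  exact ⟨po, f ≫ po.s, by simp [reassoc_of% po.s_pr], by simp [reassoc_of% po.s_pr]⟩

lemma pathHomotopic_symm {X Y : C} {f g : X ⟶ Y} (h : M.PathHomotopic f g) :
    M.PathHomotopic g f := by
  obtain ⟨po, K, h1, h2⟩ := h
  refine ⟨⟨po.P, po.pr ≫ (prod.braiding Y Y).hom, po.s,
    M.fib_comp po.fib_pr (M.fib_of_isIso _ inferInstance), po.weq_s, ?_⟩, K, ?_, ?_⟩
  · rw [← Category.assoc, po.s_pr]
    apply Limits.prod.hom_ext <;> simp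
  · dsimp only
    simp only [Category.assoc, prod.braiding_hom, prod.lift_fst]
    exact h2
  · dsimp only
    simp only [Category.assoc, prod.braiding_hom, prod.lift_snd]
    exact h1

lemma pathHomotopic_precomp {X' X Y : C} (e : X' ⟶ X) {f g : X ⟶ Y}
    (h : M.PathHomotopic f g) : M.PathHomotopic (e ≫ f) (e ≫ g) := by
  obtain ⟨po, K, h1, h2⟩ := h
  exact ⟨po, e ≫ K, by rw [Category.assoc, h1], by rw [Category.assoc, h2]⟩

lemma pathHomotopic_veryGood {X Y : C} (hX : M.Cofibrant X) {f g : X ⟶ Y}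
    (h : M.PathHomotopic f g) :
    ∃ (po : M.PathObject Y) (K : X ⟶ po.P), M.cof po.s ∧
      K ≫ po.pr ≫ prod.fst = f ∧ K ≫ po.pr ≫ prod.snd = g := by
  obtain ⟨po, K, h1, h2⟩ := h
  obtain ⟨Z, j, ρ, hjc, hjw, hρf, hfac⟩ := M.factor_triv_cof_fib po.s
  have hρw : M.weq ρ := M.weq_of_comp_left j ρ hjw (by rw [hfac]; exact po.weq_s)
  haveI := M.lift_of_weq_fib (initial.to X) ρ hX hρf hρw
  have sq : CommSq (initial.to Z) (initial.to X) ρ K := ⟨initial.hom_ext _ _⟩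
  refine ⟨⟨Z, ρ ≫ po.pr, j, M.fib_comp hρf po.fib_pr, hjw,
    by rw [← Category.assoc, hfac, po.s_pr]⟩, sq.lift, hjc, ?_, ?_⟩
  · dsimp only
    simp only [Category.assoc, reassoc_of% sq.fac_right]
    exact h1
  · dsimp only
    simp only [Category.assoc, reassoc_of% sq.fac_right]
    exact h2

lemma pathHomotopic_postcomp {X Y T : C} (hX : M.Cofibrant X) {f g : X ⟶ Y}
    (h : M.PathHomotopic f g) (e : Y ⟶ T) : M.PathHomotopic (f ≫ e) (g ≫ e) := by
  obtain ⟨po, K, hsc, h1, h2⟩ := M.pathHomotopic_veryGood hX h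
  obtain ⟨poT⟩ := M.pathObject_exists T
  haveI := M.lift_of_weq_cof po.s poT.pr hsc po.weq_s poT.fib_pr
  have sq : CommSq (e ≫ poT.s) po.s poT.pr (po.pr ≫ prod.map e e) := by
    constructor
    rw [Category.assoc, poT.s_pr, ← Category.assoc, po.s_pr]
    apply Limits.prod.hom_ext <;> simp
  refine ⟨poT, K ≫ sq.lift, ?_, ?_⟩
  · have he := h1 =≫ e
    simp only [Category.assoc] at he ⊢
    rw [reassoc_of% sq.fac_right, prod.map_fst]
    exact he
  · have he := h2 =≫ e
    simp only [Category.assoc] at he ⊢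
    rw [reassoc_of% sq.fac_right, prod.map_snd]
    exact he

/-! ### Pullback path objects (using right properness) -/

section Proper

variable (hproper : M.RightProper)
  (hprod : ∀ ⦃X X' : C⦄ (w : X ⟶ X'), M.weq w → M.weq (prod.map w w))

/-- The path object on `Y` obtained by pulling back a path object on `Y'`
along a weak equivalence `w : Y ⟶ Y'`. -/
noncomputable def pullbackPathObject {Y Y' : C} (w : Y ⟶ Y') (hw : M.weq w)
    (po : M.PathObject Y') : M.PathObject Y where
  P := pullback (prod.map w w) po.pr
  pr := pullback.fst _ _
  s := pullback.lift (prod.lift (𝟙 Y) (𝟙 Y)) (w ≫ po.s)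
    (by rw [Category.assoc, po.s_pr]; apply Limits.prod.hom_ext <;> simp)
  fib_pr := M.fib_of_isPullback (IsPullback.of_hasPullback (prod.map w w) po.pr) po.fib_pr
  weq_s := by
    apply M.weq_of_comp_right _ (pullback.snd (prod.map w w) po.pr)
      (hproper _ _ _ _ (IsPullback.of_hasPullback (prod.map w w) po.pr) po.fib_pr
        (hprod w hw))
    rw [pullback.lift_snd]
    exact M.weq_comp _ _ hw po.weq_s
  s_pr := by simp

include hproper hprod in
lemma pathHomotopic_of_postcomp_weq {X Y Y' : C} {w : Y ⟶ Y'} (hw : M.weq w)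
    {f g : X ⟶ Y} (h : M.PathHomotopic (f ≫ w) (g ≫ w)) : M.PathHomotopic f g := by
  obtain ⟨po, K, h1, h2⟩ := h
  refine ⟨M.pullbackPathObject hproper hprod w hw po,
    pullback.lift (prod.lift f g) K ?_, ?_, ?_⟩
  · apply Limits.prod.hom_ext
    · simpa using h1.symm
    · simpa using h2.symm
  · simp [pullbackPathObject]
  · simp [pullbackPathObject]

include hproper hprod in
lemma trivFib_section_homotopy {E B : C} {q : E ⟶ B} (hqf : M.fib q) (hqw : M.weq q)
    (hB : M.Cofibrant B) : ∃ t : B ⟶ E, t ≫ q = 𝟙 B ∧ M.PathHomotopic (q ≫ t) (𝟙 E) := by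
  haveI := M.lift_of_weq_fib (initial.to B) q hB hqf hqw
  have sq : CommSq (initial.to E) (initial.to B) q (𝟙 B) := ⟨initial.hom_ext _ _⟩
  obtain ⟨po⟩ := M.pathObject_exists B
  refine ⟨sq.lift, sq.fac_right, ?_⟩
  refine ⟨M.pullbackPathObject hproper hprod q hqw po,
    pullback.lift (prod.lift (q ≫ sq.lift) (𝟙 E)) (q ≫ po.s) ?_, ?_, ?_⟩
  · rw [Category.assoc, po.s_pr]
    apply Limits.prod.hom_ext
    · simp only [Category.assoc, prod.lift_map, prod.lift_fst, prod.comp_lift,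
        Category.comp_id]
      rw [sq.fac_right, Category.comp_id]
    · simp
  · simp [pullbackPathObject]
  · simp [pullbackPathObject]

/-! ### Retractions for trivial cofibrations with fibrant domain -/

lemma trivCof_retraction_homotopy {A E : C} {j : A ⟶ E} (hjc : M.cof j) (hjw : M.weq j)
    (hA : M.fib (terminal.from A)) :
    ∃ r : E ⟶ A, j ≫ r = 𝟙 A ∧ M.PathHomotopic (r ≫ j) (𝟙 E) := by
  haveI := M.lift_of_weq_cof j (terminal.from A) hjc hjw hA
  have sq : CommSq (𝟙 A) j (terminal.from A) (terminal.from E) := ⟨terminal.hom_ext _ _⟩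
  obtain ⟨po⟩ := M.pathObject_exists E
  haveI := M.lift_of_weq_cof j po.pr hjc hjw po.fib_pr
  have sq2 : CommSq (j ≫ po.s) j po.pr (prod.lift (sq.lift ≫ j) (𝟙 E)) := by
    constructor
    rw [Category.assoc, po.s_pr]
    apply Limits.prod.hom_ext
    · simp only [Category.assoc, prod.comp_lift, Category.comp_id, prod.lift_fst]
      rw [← Category.assoc, sq.fac_left, Category.id_comp]
    · simp
  refine ⟨sq.lift, sq.fac_left, po, sq2.lift, ?_, ?_⟩
  · rw [← Category.assoc, sq2.fac_right]
    simp
  · rw [← Category.assoc, sq2.fac_right]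
    simp

/-! ### Uniqueness of extensions along trivial cofibrations, up to path homotopy -/

lemma pathHomotopic_of_precomp_trivCof {X X' T : C} {w : X ⟶ X'} (hwc : M.cof w)
    (hww : M.weq w) {u u' : X' ⟶ T} (huu : w ≫ u = w ≫ u') : M.PathHomotopic u u' := by
  obtain ⟨po⟩ := M.pathObject_exists T
  haveI := M.lift_of_weq_cof w po.pr hwc hww po.fib_pr
  have sq : CommSq (w ≫ u ≫ po.s) w po.pr (prod.lift u u') := by
    constructor
    rw [Category.assoc, Category.assoc, po.s_pr]
    apply Limits.prod.hom_ext
    · simp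
    · simp only [Category.assoc, prod.comp_lift, Category.comp_id, prod.lift_snd]
      exact huu
  refine ⟨po, sq.lift, ?_, ?_⟩
  · rw [← Category.assoc, sq.fac_right]
    simp
  · rw [← Category.assoc, sq.fac_right]
    simp

/-! ### Transitivity -/

include hproper hprod in
lemma pathHomotopic_trans_of_fibrant {X Y' : C} (hY' : M.fib (terminal.from Y'))
    {f g h : X ⟶ Y'} (hfg : M.PathHomotopic f g) (hgh : M.PathHomotopic g h) :
    M.PathHomotopic f h := by
  obtain ⟨P, K, hK1, hK2⟩ := hfg
  obtain ⟨Q, L, hL1, hL2⟩ := hgh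
  have hfst : M.fib (prod.fst : Y' ⨯ Y' ⟶ Y') := M.fib_prod_fst hY'
  have hsnd : M.fib (prod.snd : Y' ⨯ Y' ⟶ Y') := M.fib_prod_snd hY'
  have hq0 : M.fib (Q.pr ≫ prod.fst) := M.fib_comp Q.fib_pr hfst
  have hq0id : Q.s ≫ Q.pr ≫ prod.fst = 𝟙 Y' := by
    rw [reassoc_of% Q.s_pr]; simp
  have hq0w : M.weq (Q.pr ≫ prod.fst) :=
    M.weq_of_comp_left _ _ Q.weq_s (by rw [hq0id]; exact M.weq_of_isIso _ inferInstance)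
  set m : Y' ⨯ Q.P ⟶ Y' ⨯ Y' := prod.map (𝟙 Y') (Q.pr ≫ prod.fst) with hm_def
  have hpb := IsPullback.of_hasPullback m P.pr
  have hmweq : M.weq m :=
    hproper _ _ _ _ (isPullback_snd_map (Q.pr ≫ prod.fst)) hsnd hq0w
  have hsndweq : M.weq (pullback.snd m P.pr) := hproper _ _ _ _ hpb P.fib_pr hmweq
  have hfibfst : M.fib (pullback.fst m P.pr) := M.fib_of_isPullback hpb P.fib_pr
  have hscomm : prod.lift (𝟙 Y') Q.s ≫ m = P.s ≫ P.pr := by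
    rw [P.s_pr, hm_def]
    apply Limits.prod.hom_ext
    · simp
    · simp only [prod.lift_map, Category.id_comp, prod.lift_snd]
      rw [hq0id]
  have hKcomm : prod.lift f L ≫ m = K ≫ P.pr := by
    rw [hm_def]
    apply Limits.prod.hom_ext
    · simp only [prod.lift_map, Category.comp_id, prod.lift_fst, Category.assoc]
      exact hK1.symm
    · simp only [prod.lift_map, prod.lift_snd, Category.assoc]
      rw [hL1, hK2]
  refine ⟨⟨pullback m P.pr,
    pullback.fst m P.pr ≫ prod.map (𝟙 Y') (Q.pr ≫ prod.snd),
    pullback.lift (prod.lift (𝟙 Y') Q.s) P.s hscomm,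
    M.fib_comp hfibfst (M.fib_prod_map_id (M.fib_comp Q.fib_pr hsnd)), ?_, ?_⟩,
    pullback.lift (prod.lift f L) K hKcomm, ?_, ?_⟩
  · apply M.weq_of_comp_right _ (pullback.snd m P.pr) hsndweq
    rw [pullback.lift_snd]
    exact P.weq_s
  · rw [← Category.assoc, pullback.lift_fst]
    apply Limits.prod.hom_ext
    · simp
    · simp only [Category.assoc, prod.lift_map, Category.id_comp, prod.lift_snd]
      rw [reassoc_of% Q.s_pr]
      simp
  · dsimp only
    rw [← Category.assoc, ← Category.assoc, pullback.lift_fst, Category.assoc]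
    simp
  · dsimp only
    rw [← Category.assoc, ← Category.assoc, pullback.lift_fst, Category.assoc]
    simp only [prod.map_snd, prod.lift_snd_assoc]
    exact hL2

lemma exists_fibrant_repl (Y : C) :
    ∃ (Y' : C) (w : Y ⟶ Y'), M.cof w ∧ M.weq w ∧ M.fib (terminal.from Y') := by
  obtain ⟨Z, i, p, hc, hw, hf, hfac⟩ := M.factor_triv_cof_fib (terminal.from Y)
  refine ⟨Z, i, hc, hw, ?_⟩
  rwa [show terminal.from Z = p from terminal.hom_ext _ _]

include hproper hprod in
lemma pathHomotopic_trans {X Y : C} (hX : M.Cofibrant X) {f g h : X ⟶ Y}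
    (hfg : M.PathHomotopic f g) (hgh : M.PathHomotopic g h) : M.PathHomotopic f h := by
  obtain ⟨Y', w, hwc, hww, hY'⟩ := M.exists_fibrant_repl Y
  exact M.pathHomotopic_of_postcomp_weq hproper hprod hww
    (M.pathHomotopic_trans_of_fibrant hproper hprod hY'
      (M.pathHomotopic_postcomp hX hfg w) (M.pathHomotopic_postcomp hX hgh w))

/-! ### Congruence -/

include hproper hprod in
lemma congruence_of_homRel {P : C → Prop} (hP : ∀ X, P X → M.Cofibrant X)
    (r : HomRel (ObjectProperty.FullSubcategory P))
    (hr : ∀ (X Y : ObjectProperty.FullSubcategory P) (f g : X ⟶ Y), r f g ↔ M.PathHomotopic f.hom g.hom) :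
    Congruence r := by
  refine { equivalence := ?_, comp_left := ?_, comp_right := ?_ }
  rotate_right
  · intro X Y
    constructor
    · intro f
      rw [hr]
      exact M.pathHomotopic_refl f.hom
    · intro f g hfg
      rw [hr] at *
      exact M.pathHomotopic_symm hfg
    · intro f g h h1 h2
      rw [hr] at *
      exact M.pathHomotopic_trans hproper hprod (hP _ X.property) h1 h2
  · intro X Y Z f g g' hg
    rw [hr] at *
    exact M.pathHomotopic_precomp f.hom hg
  · intro X Y Z f f' g hf
    rw [hr] at *
    exact M.pathHomotopic_postcomp (hP _ X.property) hf g.hom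

/-! ### The homotopy category of bifibrant objects -/

def BifibProp : C → Prop := fun X => M.Cofibrant X ∧ M.fib (terminal.from X)

def bifibRel : HomRel (ObjectProperty.FullSubcategory M.BifibProp) :=
  fun _ _ f g => M.PathHomotopic f.hom g.hom

include hproper hprod in
lemma congruence_bifibRel : Congruence M.bifibRel :=
  M.congruence_of_homRel hproper hprod (fun _ h => h.1) _ (fun _ _ _ _ => Iff.rfl)

include hproper hprod in
lemma isIso_bifib_quotient_map {X Y : ObjectProperty.FullSubcategory M.BifibProp} (f : X ⟶ Y)
    (hf : M.weq f.hom) : IsIso ((Quotient.functor M.bifibRel).map f) := by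
  obtain ⟨E, j, q, hjc, hqf, hqw, hfac⟩ := M.factor_cof_triv_fib f.hom
  have hjw : M.weq j := M.weq_of_comp_right j q hqw (by rw [hfac]; exact hf)
  have hE : M.BifibProp E := by
    constructor
    · show M.cof (initial.to E)
      rw [show initial.to E = initial.to X.obj ≫ j from initial.hom_ext _ _]
      exact M.cof_comp X.property.1 hjc
    · rw [show terminal.from E = q ≫ terminal.from Y.obj from terminal.hom_ext _ _]
      exact M.fib_comp hqf Y.property.2
  obtain ⟨r, hr1, hr2⟩ := M.trivCof_retraction_homotopy hjc hjw X.property.2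
  obtain ⟨t, ht1, ht2⟩ := M.trivFib_section_homotopy hproper hprod hqf hqw Y.property.1
  let EE : ObjectProperty.FullSubcategory M.BifibProp := ⟨E, hE⟩
  let j' : X ⟶ EE := ObjectProperty.homMk j
  let q' : EE ⟶ Y := ObjectProperty.homMk q
  let r' : EE ⟶ X := ObjectProperty.homMk r
  let t' : Y ⟶ EE := ObjectProperty.homMk t
  have hfj : f = j' ≫ q' := ObjectProperty.hom_ext _ hfac.symm
  rw [hfj, CategoryTheory.Functor.map_comp]
  have hj : IsIso ((Quotient.functor M.bifibRel).map j') := by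
    refine ⟨(Quotient.functor M.bifibRel).map r', ?_, ?_⟩
    · have e : (Quotient.functor M.bifibRel).map (j' ≫ r')
          = (Quotient.functor M.bifibRel).map (𝟙 X) := congrArg _ (ObjectProperty.hom_ext _ hr1)
      simpa using e
    · have e : (Quotient.functor M.bifibRel).map (r' ≫ j')
          = (Quotient.functor M.bifibRel).map (𝟙 EE) := CategoryTheory.Quotient.sound _ (by exact hr2)
      simpa using e
  have hq : IsIso ((Quotient.functor M.bifibRel).map q') := by
    refine ⟨(Quotient.functor M.bifibRel).map t', ?_, ?_⟩
    · have e : (Quotient.functor M.bifibRel).map (q' ≫ t')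
          = (Quotient.functor M.bifibRel).map (𝟙 EE) := CategoryTheory.Quotient.sound _ (by exact ht2)
      simpa using e
    · have e : (Quotient.functor M.bifibRel).map (t' ≫ q')
          = (Quotient.functor M.bifibRel).map (𝟙 Y) := congrArg _ (ObjectProperty.hom_ext _ ht1)
      simpa using e
  exact inferInstance

/-! ### The fibrant replacement functor to the homotopy category of bifibrant objects -/

noncomputable def frepObj (X : C) : C := (M.exists_fibrant_repl X).choose

noncomputable def frepMap (X : C) : X ⟶ M.frepObj X :=
  (M.exists_fibrant_repl X).choose_spec.choose

lemma frep_cof (X : C) : M.cof (M.frepMap X) :=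
  (M.exists_fibrant_repl X).choose_spec.choose_spec.1

lemma frep_weq (X : C) : M.weq (M.frepMap X) :=
  (M.exists_fibrant_repl X).choose_spec.choose_spec.2.1

lemma frep_fib (X : C) : M.fib (terminal.from (M.frepObj X)) :=
  (M.exists_fibrant_repl X).choose_spec.choose_spec.2.2

noncomputable def fliftSpec {X Y : C} (f : X ⟶ Y) :
    {l : M.frepObj X ⟶ M.frepObj Y // M.frepMap X ≫ l = f ≫ M.frepMap Y} := by
  haveI := M.lift_of_weq_cof (M.frepMap X) (terminal.from (M.frepObj Y))
    (M.frep_cof X) (M.frep_weq X) (M.frep_fib Y)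
  have sq : CommSq (f ≫ M.frepMap Y) (M.frepMap X) (terminal.from (M.frepObj Y))
      (terminal.from (M.frepObj X)) := ⟨terminal.hom_ext _ _⟩
  exact ⟨sq.lift, sq.fac_left⟩

noncomputable def flift {X Y : C} (f : X ⟶ Y) : M.frepObj X ⟶ M.frepObj Y :=
  (M.fliftSpec f).1

lemma flift_comm {X Y : C} (f : X ⟶ Y) :
    M.frepMap X ≫ M.flift f = f ≫ M.frepMap Y := (M.fliftSpec f).2

lemma frep_bifib (X : ObjectProperty.FullSubcategory M.Cofibrant) : M.BifibProp (M.frepObj X.obj) := by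
  constructor
  · show M.cof (initial.to (M.frepObj X.obj))
    rw [show initial.to (M.frepObj X.obj) = initial.to X.obj ≫ M.frepMap X.obj from
      initial.hom_ext _ _]
    exact M.cof_comp X.property (M.frep_cof X.obj)
  · exact M.frep_fib X.obj

noncomputable def Frep : ObjectProperty.FullSubcategory M.Cofibrant ⥤ Quotient M.bifibRel where
  obj X := (Quotient.functor M.bifibRel).obj ⟨M.frepObj X.obj, M.frep_bifib X⟩
  map {X Y} f := (Quotient.functor M.bifibRel).map
    (X := ⟨M.frepObj X.obj, M.frep_bifib X⟩) (Y := ⟨M.frepObj Y.obj, M.frep_bifib Y⟩)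
    (ObjectProperty.homMk (M.flift f.hom))
  map_id X := by
    have h : M.bifibRel (X := ⟨M.frepObj X.obj, M.frep_bifib X⟩)
        (Y := ⟨M.frepObj X.obj, M.frep_bifib X⟩)
        (ObjectProperty.homMk (M.flift (𝟙 X.obj))) (𝟙 _) := by
      apply M.pathHomotopic_of_precomp_trivCof (M.frep_cof X.obj) (M.frep_weq X.obj)
      show M.frepMap X.obj ≫ M.flift (𝟙 X.obj) = M.frepMap X.obj ≫ 𝟙 _
      rw [M.flift_comm (𝟙 X.obj), Category.id_comp, Category.comp_id]
    rw [← CategoryTheory.Functor.map_id (Quotient.functor M.bifibRel)]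
    exact CategoryTheory.Quotient.sound M.bifibRel h
  map_comp {X Y Z} f g := by
    have h : M.bifibRel (X := ⟨M.frepObj X.obj, M.frep_bifib X⟩)
        (Y := ⟨M.frepObj Z.obj, M.frep_bifib Z⟩)
        (ObjectProperty.homMk (M.flift (f.hom ≫ g.hom)))
        ((show (⟨M.frepObj X.obj, M.frep_bifib X⟩ : ObjectProperty.FullSubcategory M.BifibProp) ⟶
            ⟨M.frepObj Y.obj, M.frep_bifib Y⟩ from ObjectProperty.homMk (M.flift f.hom)) ≫
         (show (⟨M.frepObj Y.obj, M.frep_bifib Y⟩ : ObjectProperty.FullSubcategory M.BifibProp) ⟶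
            ⟨M.frepObj Z.obj, M.frep_bifib Z⟩ from ObjectProperty.homMk (M.flift g.hom))) := by
      apply M.pathHomotopic_of_precomp_trivCof (M.frep_cof X.obj) (M.frep_weq X.obj)
      show M.frepMap X.obj ≫ M.flift (f.hom ≫ g.hom) =
        M.frepMap X.obj ≫ M.flift f.hom ≫ M.flift g.hom
      rw [M.flift_comm (f.hom ≫ g.hom), ← Category.assoc,
        M.flift_comm f.hom, Category.assoc, Category.assoc, M.flift_comm g.hom]
    rw [← CategoryTheory.Functor.map_comp]
    exact CategoryTheory.Quotient.sound M.bifibRel h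

include hproper hprod in
lemma Frep_inverts : M.weqCof.IsInvertedBy M.Frep := by
  intro X Y f hf
  have h1 : M.weq (M.flift f.hom) := by
    have hcomm := M.flift_comm f.hom
    exact M.weq_of_comp_left _ _ (M.frep_weq X.obj)
      (by rw [hcomm]; exact M.weq_comp _ _ hf (M.frep_weq Y.obj))
  exact M.isIso_bifib_quotient_map hproper hprod
    (X := ⟨M.frepObj X.obj, M.frep_bifib X⟩) (Y := ⟨M.frepObj Y.obj, M.frep_bifib Y⟩)
    (ObjectProperty.homMk (M.flift f.hom)) h1

include hproper hprod in
lemma Frep_reflects {X Y : ObjectProperty.FullSubcategory M.Cofibrant} (f g : X ⟶ Y)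
    (h : M.Frep.map f = M.Frep.map g) : M.PathHomotopic f.hom g.hom := by
  haveI : Congruence M.bifibRel := M.congruence_bifibRel hproper hprod
  have h' : M.bifibRel
      (X := ⟨M.frepObj X.obj, M.frep_bifib X⟩) (Y := ⟨M.frepObj Y.obj, M.frep_bifib Y⟩)
      (ObjectProperty.homMk (M.flift f.hom)) (ObjectProperty.homMk (M.flift g.hom)) :=
    (Quotient.functor_map_eq_iff M.bifibRel _ _).1 h
  have h2 : M.PathHomotopic (f.hom ≫ M.frepMap Y.obj) (g.hom ≫ M.frepMap Y.obj) := by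
    rw [← M.flift_comm f.hom, ← M.flift_comm g.hom]
    exact M.pathHomotopic_precomp _ h'
  exact M.pathHomotopic_of_postcomp_weq hproper hprod (M.frep_weq Y.obj) h2

end Proper

end ModelStructure

open ModelStructure in
/-- If `M` is right proper and `w × w` is a weak equivalence for every weak equivalence `w`,
then path homotopy is a congruence on the full subcategory of cofibrant objects and the
canonical functor from the quotient category to the localization at weak equivalences
(the homotopy category of cofibrant objects) is faithful. -/
theorem faithful_quotient_to_homotopyCategory_of_cofibrant
    {C : Type u} [Category.{v} C] [HasFiniteLimits C] [HasFiniteColimits C]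
    (M : ModelStructure C) (hproper : M.RightProper)
    (hprod : ∀ ⦃X X' : C⦄ (w : X ⟶ X'), M.weq w → M.weq (prod.map w w)) :
    Congruence M.pathRel ∧
    ∃ (h : ∀ (X Y : ObjectProperty.FullSubcategory M.Cofibrant) (f g : X ⟶ Y),
        M.pathRel f g → M.weqCof.Q.map f = M.weqCof.Q.map g),
      (CategoryTheory.Quotient.lift M.pathRel M.weqCof.Q h).Faithful := by
  have cong : Congruence M.pathRel :=
    M.congruence_of_homRel hproper hprod (fun _ h => h) M.pathRel (fun _ _ _ _ => Iff.rfl)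
  have h : ∀ (X Y : ObjectProperty.FullSubcategory M.Cofibrant) (f g : X ⟶ Y),
      M.pathRel f g → M.weqCof.Q.map f = M.weqCof.Q.map g := by
    intro X Y f g hfg
    have hfg' : M.PathHomotopic f.hom g.hom := hfg
    obtain ⟨po, K, h1, h2⟩ := hfg'
    obtain ⟨W, ι, ρ, hιc, hρf, hρw, hfac⟩ := M.factor_cof_triv_fib (initial.to po.P)
    have hW : M.Cofibrant W := by
      show M.cof (initial.to W)
      rw [show initial.to W = ι from initial.hom_ext _ _]
      exact hιc
    haveI := M.lift_of_weq_fib (initial.to X.obj) ρ X.property hρf hρw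
    haveI := M.lift_of_weq_fib (initial.to Y.obj) ρ Y.property hρf hρw
    have sqK : CommSq (initial.to W) (initial.to X.obj) ρ K := ⟨initial.hom_ext _ _⟩
    have sqS : CommSq (initial.to W) (initial.to Y.obj) ρ po.s := ⟨initial.hom_ext _ _⟩
    let WW : ObjectProperty.FullSubcategory M.Cofibrant := ⟨W, hW⟩
    let a : WW ⟶ Y := ObjectProperty.homMk (show W ⟶ Y.obj from ρ ≫ po.pr ≫ prod.fst)
    let b : WW ⟶ Y := ObjectProperty.homMk (show W ⟶ Y.obj from ρ ≫ po.pr ≫ prod.snd)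
    let s' : Y ⟶ WW := ObjectProperty.homMk (show Y.obj ⟶ W from sqS.lift)
    let K' : X ⟶ WW := ObjectProperty.homMk (show X.obj ⟶ W from sqK.lift)
    have hs'a : s' ≫ a = 𝟙 Y := by
      apply ObjectProperty.hom_ext
      show sqS.lift ≫ ρ ≫ po.pr ≫ prod.fst = 𝟙 Y.obj
      rw [reassoc_of% sqS.fac_right, reassoc_of% po.s_pr]
      simp [prod.lift_fst]
    have hs'b : s' ≫ b = 𝟙 Y := by
      apply ObjectProperty.hom_ext
      show sqS.lift ≫ ρ ≫ po.pr ≫ prod.snd = 𝟙 Y.obj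
      rw [reassoc_of% sqS.fac_right, reassoc_of% po.s_pr]
      simp [prod.lift_snd]
    have hws' : M.weqCof s' :=
      M.weq_of_comp_right _ ρ hρw (by show M.weq (sqS.lift ≫ ρ); rw [sqS.fac_right]; exact po.weq_s)
    have hKa : K' ≫ a = f := by
      apply ObjectProperty.hom_ext
      show sqK.lift ≫ ρ ≫ po.pr ≫ prod.fst = f.hom
      rw [reassoc_of% sqK.fac_right]
      exact h1
    have hKb : K' ≫ b = g := by
      apply ObjectProperty.hom_ext
      show sqK.lift ≫ ρ ≫ po.pr ≫ prod.snd = g.hom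
      rw [reassoc_of% sqK.fac_right]
      exact h2
    haveI : IsIso (M.weqCof.Q.map s') := M.weqCof.Q_inverts s' hws'
    have e1 : M.weqCof.Q.map s' ≫ M.weqCof.Q.map a = 𝟙 _ := by
      rw [← CategoryTheory.Functor.map_comp, hs'a, CategoryTheory.Functor.map_id]
    have e2 : M.weqCof.Q.map s' ≫ M.weqCof.Q.map b = 𝟙 _ := by
      rw [← CategoryTheory.Functor.map_comp, hs'b, CategoryTheory.Functor.map_id]
    have hab : M.weqCof.Q.map a = M.weqCof.Q.map b := by
      rw [← IsIso.inv_eq_of_hom_inv_id e1, ← IsIso.inv_eq_of_hom_inv_id e2]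
    rw [← hKa, ← hKb, CategoryTheory.Functor.map_comp, CategoryTheory.Functor.map_comp, hab]
  refine ⟨cong, h, ?_⟩
  have fac : M.weqCof.Q ⋙
      Localization.Construction.lift M.Frep (M.Frep_inverts hproper hprod) = M.Frep :=
    Localization.Construction.fac _ _
  constructor
  intro x y φ ψ hφψ
  obtain ⟨f, rfl⟩ := (Quotient.functor M.pathRel).map_surjective φ
  obtain ⟨g, rfl⟩ := (Quotient.functor M.pathRel).map_surjective ψ
  have hQ : M.weqCof.Q.map f = M.weqCof.Q.map g := by
    rw [Quotient.lift_map_functor_map, Quotient.lift_map_functor_map] at hφψ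
    exact hφψ
  have hF : M.Frep.map f = M.Frep.map g := by
    rw [CategoryTheory.Functor.congr_hom fac.symm f, CategoryTheory.Functor.congr_hom fac.symm g]
    simp only [CategoryTheory.Functor.comp_map]
    rw [hQ]
  exact CategoryTheory.Quotient.sound _ (M.Frep_reflects hproper hprod f g hF)
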